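/- arXiv:2501.12205 — 4 statements merged into one kernel-verified Lean document; each statement's English description precedes it below -/
import Mathlib

section
/- If G is an (n,d,α)-expander (i.e., the spectral norm of A_G − (d/n)J is at most αd) and W ⊆ V(G) satisfies |V(G) \ W| ≤ αn, then the induced subgraph G[W] is a (|W|, d, 2α)-expander, i.e., the spectral norm of A_{G[W]} − (d/|W|)J_{|W|} is at most 2αd. -/
open Real Finset
open scoped ENNReal

noncomputable def specNorm {V : Type*} [Fintype V] [DecidableEq V] (M : Matrix V V ℝ) : ℝ :=
  ‖Matrix.toEuclideanCLM (𝕜 := ℝ) M‖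

noncomputable def edgeCount {V : Type*} [Fintype V] (A : Matrix V V ℝ) (X Y : Finset V) : ℝ :=
  ∑ x ∈ X, ∑ y ∈ Y, A x y

section helpers
set_option linter.unusedSectionVars false
variable {V : Type*} [Fintype V] [DecidableEq V]

lemma euclid_apply (M : Matrix V V ℝ) (x : EuclideanSpace ℝ V) (i : V) :
    (Matrix.toEuclideanCLM (𝕜 := ℝ) M x) i = M.mulVec (fun j => x j) i := by
  have h := Matrix.ofLp_toEuclideanCLM (𝕜 := ℝ) M x
  have h2 : (WithLp.equiv 2 (V → ℝ)) ((Matrix.toEuclideanCLM (𝕜 := ℝ) M) x) i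
      = M.mulVec ((WithLp.equiv 2 (V → ℝ)) x) i := by
    exact congrFun h i
  exact h2

lemma euclid_norm (x : EuclideanSpace ℝ V) : ‖x‖ = Real.sqrt (∑ i, (x i) ^ 2) := by
  rw [EuclideanSpace.norm_eq]
  simp [Real.norm_eq_abs, sq_abs]

lemma specNorm_submatrix_le (M : Matrix V V ℝ) (W : Finset V) :
    specNorm (M.submatrix (fun x : W => (x : V)) (fun x : W => (x : V))) ≤ specNorm M := by
  apply ContinuousLinearMap.opNorm_le_bound _ (norm_nonneg _)
  intro v
  set u : EuclideanSpace ℝ V := (WithLp.equiv 2 (V → ℝ)).symm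
    (fun i => if h : i ∈ W then v ⟨i, h⟩ else 0) with hu_def
  have hu_app : ∀ i : V, u i = if h : i ∈ W then v ⟨i, h⟩ else 0 := fun i => rfl
  have h1 : ∀ i : W, u (i : V) = v i := by
    intro i; rw [hu_app]; simp
  have hnorm_u : ‖u‖ = ‖v‖ := by
    rw [euclid_norm, euclid_norm]
    congr 1
    calc ∑ i : V, (u i) ^ 2 = ∑ i ∈ W, (u i) ^ 2 := by
          refine (Finset.sum_subset (Finset.subset_univ W) ?_).symm
          intro i _ hi
          rw [hu_app]
          simp [hi]
      _ = ∑ i ∈ W.attach, (u (i : V)) ^ 2 := (Finset.sum_attach W fun i => (u i) ^ 2).symm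
      _ = ∑ i : W, (v i) ^ 2 := by
          rw [Finset.univ_eq_attach]
          exact Finset.sum_congr rfl fun i _ => by rw [h1]
  have key : ∀ i : W, (Matrix.toEuclideanCLM (𝕜 := ℝ)
      (M.submatrix (fun x : W => (x : V)) (fun x : W => (x : V))) v) i
      = (Matrix.toEuclideanCLM (𝕜 := ℝ) M u) (i : V) := by
    intro i
    rw [euclid_apply, euclid_apply]
    simp only [Matrix.mulVec, dotProduct, Matrix.submatrix_apply]
    symm
    calc ∑ j : V, M (i : V) j * u j = ∑ j ∈ W, M (i : V) j * u j := by
          refine (Finset.sum_subset (Finset.subset_univ W) ?_).symm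
          intro j _ hj
          rw [hu_app]
          simp [hj]
      _ = ∑ j ∈ W.attach, M (i : V) (j : V) * u (j : V) :=
          (Finset.sum_attach W fun j => M (i : V) j * u j).symm
      _ = ∑ j : W, M (i : V) (j : V) * v j := by
          rw [Finset.univ_eq_attach]
          exact Finset.sum_congr rfl fun j _ => by rw [h1]
  calc ‖Matrix.toEuclideanCLM (𝕜 := ℝ)
        (M.submatrix (fun x : W => (x : V)) (fun x : W => (x : V))) v‖
      = Real.sqrt (∑ i : W, ((Matrix.toEuclideanCLM (𝕜 := ℝ) M u) (i : V)) ^ 2) := by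
        rw [euclid_norm]
        congr 1
        exact Finset.sum_congr rfl fun i _ => by rw [key]
    _ ≤ Real.sqrt (∑ i : V, ((Matrix.toEuclideanCLM (𝕜 := ℝ) M u) i) ^ 2) := by
        apply Real.sqrt_le_sqrt
        calc ∑ i : W, ((Matrix.toEuclideanCLM (𝕜 := ℝ) M u) (i : V)) ^ 2
            = ∑ i ∈ W, ((Matrix.toEuclideanCLM (𝕜 := ℝ) M u) i) ^ 2 := by
              rw [Finset.univ_eq_attach]
              exact Finset.sum_attach W fun i => ((Matrix.toEuclideanCLM (𝕜 := ℝ) M u) i) ^ 2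
          _ ≤ _ := Finset.sum_le_sum_of_subset_of_nonneg (Finset.subset_univ W)
              fun i _ _ => sq_nonneg _
    _ = ‖Matrix.toEuclideanCLM (𝕜 := ℝ) M u‖ := (euclid_norm _).symm
    _ ≤ ‖Matrix.toEuclideanCLM (𝕜 := ℝ) M‖ * ‖u‖ := ContinuousLinearMap.le_opNorm _ _
    _ = specNorm M * ‖v‖ := by rw [hnorm_u]; rfl

lemma specNorm_smul_J_le (c : ℝ) :
    specNorm (c • Matrix.of (fun _ _ => (1 : ℝ)) : Matrix V V ℝ) ≤ |c| * Fintype.card V := by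
  apply ContinuousLinearMap.opNorm_le_bound _ (by positivity)
  intro v
  have hv2 : ‖v‖ ^ 2 = ∑ j, (v j) ^ 2 := by
    rw [euclid_norm, Real.sq_sqrt]
    positivity
  have happ : ∀ i : V, ((c • Matrix.of (fun _ _ => (1 : ℝ)) : Matrix V V ℝ).mulVec
      (fun j => v j)) i = c * ∑ j, v j := by
    intro i
    simp [Matrix.mulVec, dotProduct, Finset.mul_sum]
  have hS : (∑ j, v j) ^ 2 ≤ (Fintype.card V : ℝ) * ∑ j, (v j) ^ 2 := by
    simpa using sq_sum_le_card_mul_sum_sq (s := (Finset.univ : Finset V)) (f := fun j => v j)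
  have hsq : ∑ i : V, ((Matrix.toEuclideanCLM (𝕜 := ℝ)
        (c • Matrix.of (fun _ _ => (1 : ℝ)) : Matrix V V ℝ) v) i) ^ 2
      ≤ (|c| * Fintype.card V * ‖v‖) ^ 2 := by
    have : ∑ i : V, ((Matrix.toEuclideanCLM (𝕜 := ℝ)
        (c • Matrix.of (fun _ _ => (1 : ℝ)) : Matrix V V ℝ) v) i) ^ 2
        = (Fintype.card V : ℝ) * (c * ∑ j, v j) ^ 2 := by
      rw [Finset.sum_congr rfl fun i _ => by rw [euclid_apply, happ]]
      simp [Finset.sum_const]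
    have habs : |c| ^ 2 = c ^ 2 := sq_abs c
    have hnv : 0 ≤ (Fintype.card V : ℝ) := Nat.cast_nonneg _
    have hrhs : (|c| * (Fintype.card V : ℝ) * ‖v‖) ^ 2
        = (Fintype.card V : ℝ) * (c ^ 2 * ((Fintype.card V : ℝ) * ∑ j, (v j) ^ 2)) := by
      rw [show (|c| * (Fintype.card V : ℝ) * ‖v‖) ^ 2
          = |c| ^ 2 * ((Fintype.card V : ℝ)) ^ 2 * ‖v‖ ^ 2 by ring, habs, hv2]
      ring
    rw [this, hrhs]
    nlinarith [mul_le_mul_of_nonneg_left hS (mul_nonneg hnv (sq_nonneg c))]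
  calc ‖Matrix.toEuclideanCLM (𝕜 := ℝ)
        (c • Matrix.of (fun _ _ => (1 : ℝ)) : Matrix V V ℝ) v‖
      = Real.sqrt (∑ i : V, ((Matrix.toEuclideanCLM (𝕜 := ℝ)
        (c • Matrix.of (fun _ _ => (1 : ℝ)) : Matrix V V ℝ) v) i) ^ 2) := euclid_norm _
    _ ≤ Real.sqrt ((|c| * Fintype.card V * ‖v‖) ^ 2) := Real.sqrt_le_sqrt hsq
    _ = |c| * Fintype.card V * ‖v‖ := Real.sqrt_sq (by positivity)

lemma specNorm_add_le (A B : Matrix V V ℝ) : specNorm (A + B) ≤ specNorm A + specNorm B := by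
  unfold specNorm
  rw [map_add]
  exact norm_add_le _ _

end helpers

theorem stmt_0 {V : Type*} [Fintype V] [DecidableEq V] (G : SimpleGraph V) [DecidableRel G.Adj]
    (n : ℕ) (hn : Fintype.card V = n) (d α : ℝ)
    (hexp : specNorm (G.adjMatrix ℝ - (d / n) • Matrix.of (fun _ _ => (1:ℝ))) ≤ α * d)
    (W : Finset V) (hW : ((Wᶜ.card : ℝ) ≤ α * n)) :
    specNorm ((G.adjMatrix ℝ).submatrix (fun x : W => (x : V)) (fun x : W => (x : V))
        - (d / W.card) • Matrix.of (fun _ _ => (1:ℝ))) ≤ 2 * α * d := by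
  classical
  set M : Matrix V V ℝ := G.adjMatrix ℝ - (d / n) • Matrix.of (fun _ _ => (1:ℝ)) with hM
  have hαd : 0 ≤ α * d := le_trans (norm_nonneg _) hexp
  have hdecomp : (G.adjMatrix ℝ).submatrix (fun x : W => (x : V)) (fun x : W => (x : V))
      - (d / W.card) • Matrix.of (fun _ _ => (1:ℝ))
      = M.submatrix (fun x : W => (x : V)) (fun x : W => (x : V))
        + (d / n - d / W.card) • (Matrix.of (fun _ _ => (1:ℝ)) : Matrix W W ℝ) := by
    ext i j
    simp [hM, Matrix.submatrix_apply, sub_smul]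
  have key : |d / (n : ℝ) - d / (W.card : ℝ)| * ((Fintype.card W : ℝ)) ≤ α * d := by
    rw [Fintype.card_coe]
    rcases Nat.eq_zero_or_pos W.card with h0 | hpos
    · rw [h0]
      simpa using hαd
    · by_cases hWc : Wᶜ.card = 0
      · have hWuniv : W = Finset.univ := by
          have : Wᶜ = ∅ := Finset.card_eq_zero.mp hWc
          rwa [Finset.compl_eq_empty_iff] at this
        rw [hWuniv, Finset.card_univ, hn]
        simpa using hαd
      · have h1le : (1 : ℝ) ≤ (Wᶜ.card : ℝ) := by
          exact_mod_cast Nat.one_le_iff_ne_zero.mpr hWc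
        have hαn : (1 : ℝ) ≤ α * n := le_trans h1le hW
        have hnpos : 0 < (n : ℝ) := by
          rcases Nat.eq_zero_or_pos n with h | h
          · exfalso; rw [h] at hαn; simp at hαn; linarith
          · exact_mod_cast h
        have hα : 0 < α := by nlinarith
        have hd : 0 ≤ d := by nlinarith
        have hw : 0 < (W.card : ℝ) := by exact_mod_cast hpos
        have hwn : (W.card : ℝ) ≤ (n : ℝ) := by
          have h := Finset.card_le_univ W
          rw [hn] at h
          exact_mod_cast h
        have hcompl : (Wᶜ.card : ℝ) = (n : ℝ) - (W.card : ℝ) := by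
          have h := Finset.card_compl W
          rw [hn] at h
          have hle : W.card ≤ n := by exact_mod_cast hwn
          rw [h]
          push_cast [Nat.cast_sub hle]
          ring
        have hle2 : d / (n : ℝ) ≤ d / (W.card : ℝ) := by
          apply div_le_div_of_nonneg_left hd hw hwn
        rw [abs_of_nonpos (by linarith), neg_sub]
        have heq : (d / (W.card : ℝ) - d / (n : ℝ)) * (W.card : ℝ)
            = d * ((n : ℝ) - (W.card : ℝ)) / (n : ℝ) := by
          field_simp
        rw [heq, div_le_iff₀ hnpos]
        have hW' : (n : ℝ) - (W.card : ℝ) ≤ α * n := by rw [← hcompl]; exact hW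
        nlinarith [mul_le_mul_of_nonneg_left hW' hd]
  calc specNorm ((G.adjMatrix ℝ).submatrix (fun x : W => (x : V)) (fun x : W => (x : V))
        - (d / W.card) • Matrix.of (fun _ _ => (1:ℝ)))
      = specNorm (M.submatrix (fun x : W => (x : V)) (fun x : W => (x : V))
        + (d / n - d / W.card) • (Matrix.of (fun _ _ => (1:ℝ)) : Matrix W W ℝ)) := by
        rw [hdecomp]
    _ ≤ specNorm (M.submatrix (fun x : W => (x : V)) (fun x : W => (x : V)))
        + specNorm ((d / n - d / W.card) • (Matrix.of (fun _ _ => (1:ℝ)) : Matrix W W ℝ)) :=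
        specNorm_add_le _ _
    _ ≤ α * d + α * d := by
        apply add_le_add
        · exact le_trans (specNorm_submatrix_le M W) hexp
        · exact le_trans (specNorm_smul_J_le (d / n - d / W.card)) key
    _ = 2 * α * d := by ring
end

section
/- For the kernel K(α,β) = sin(|α| − min{|β|, π/2}) defined on (−π, π] × (−π, π], one has K(α,β) + K(β,α) ≤ 𝟙[|α| ≥ π/2] + 𝟙[|β| ≥ π/2] for all α, β ∈ (−π, π]. -/
open Real

theorem stmt_3 (a b : ℝ) (ha : a ∈ Set.Ioc (-π) π) (hb : b ∈ Set.Ioc (-π) π) :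
    Real.sin (|a| - min |b| (π/2)) + Real.sin (|b| - min |a| (π/2)) ≤
      (if π/2 ≤ |a| then (1:ℝ) else 0) + (if π/2 ≤ |b| then (1:ℝ) else 0) := by
  by_cases h1 : π/2 ≤ |a| <;> by_cases h2 : π/2 ≤ |b| <;>
    simp only [h1, h2, if_pos, if_neg, not_false_iff]
  · linarith [Real.sin_le_one (|a| - min |b| (π/2)), Real.sin_le_one (|b| - min |a| (π/2))]
  · push_neg at h2
    rw [min_eq_left h2.le, min_eq_right h1]
    have hc : Real.sin (|b| - π/2) = -Real.cos |b| := by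
      rw [show |b| - π/2 = -(π/2 - |b|) by ring, Real.sin_neg, Real.sin_pi_div_two_sub]
    have hcn : 0 ≤ Real.cos |b| := Real.cos_nonneg_of_mem_Icc
      ⟨by linarith [abs_nonneg b], h2.le⟩
    have := Real.sin_le_one (|a| - |b|)
    simp only [hc]
    linarith
  · push_neg at h1
    rw [min_eq_right h2, min_eq_left h1.le]
    have hc : Real.sin (|a| - π/2) = -Real.cos |a| := by
      rw [show |a| - π/2 = -(π/2 - |a|) by ring, Real.sin_neg, Real.sin_pi_div_two_sub]
    have hcn : 0 ≤ Real.cos |a| := Real.cos_nonneg_of_mem_Icc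
      ⟨by linarith [abs_nonneg a], h1.le⟩
    have := Real.sin_le_one (|b| - |a|)
    simp only [hc]
    linarith
  · push_neg at h1 h2
    rw [min_eq_left h2.le, min_eq_left h1.le]
    have : |b| - |a| = -(|a| - |b|) := by ring
    rw [this, Real.sin_neg]
    simp
end

section
/- Let θ be a stable state of the homogeneous Kuramoto model on a graph G with ρ₁(θ) ∈ [0,1] (i.e., Σ_v e^{iθ_v} is a nonnegative real). Then for all 0 < γ < β ≤ π/2, with C_t := {v : |θ_v| ≥ t}: e(C_β, C_β) ≥ e(C_{π/2}, C_β) ≥ sin(β − γ) · e(C_β, (C_γ)^c). -/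
open Real Finset
open scoped ENNReal

noncomputable def kuramotoHessian {V : Type*} [Fintype V] [DecidableEq V]
    (A : Matrix V V ℝ) (θ : V → ℝ) : Matrix V V ℝ :=
  Matrix.of fun v u =>
    if v = u then ∑ w, A v w * Real.cos (θ v - θ w)
    else - (A v u * Real.cos (θ v - θ u))

/-- θ is a stable state: critical point of the Kuramoto energy with PSD Hessian. -/
def IsStableState {V : Type*} [Fintype V] [DecidableEq V]
    (A : Matrix V V ℝ) (θ : V → ℝ) : Prop :=
  (∀ v, ∑ u, A v u * Real.sin (θ v - θ u) = 0) ∧ (kuramotoHessian A θ).PosSemidef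

/-- The order parameter ∑ e^{iθ_v} is a nonnegative real. -/
def OrderParamNonneg {V : Type*} [Fintype V] (θ : V → ℝ) : Prop :=
  ∃ r : ℝ, 0 ≤ r ∧ ∑ v, Complex.exp ((θ v : ℂ) * Complex.I) = (r : ℂ)

lemma sin_le_sin_aux' {b t : ℝ} (hb2 : b ≤ π/2)
    (ht1 : -π - b ≤ t) (ht2 : t ≤ b) : Real.sin t ≤ Real.sin b := by
  have h := Real.sin_sub_sin t b
  have hc : 0 ≤ Real.cos ((t + b) / 2) :=
    Real.cos_nonneg_of_mem_Icc ⟨by linarith, by linarith⟩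
  have hsn : Real.sin ((t - b) / 2) ≤ 0 :=
    Real.sin_nonpos_of_nonpos_of_neg_pi_le (by linarith) (by linarith)
  nlinarith

theorem stmt_14 {V : Type*} [Fintype V] [DecidableEq V] (G : SimpleGraph V) [DecidableRel G.Adj]
    (θ : V → ℝ) (hrange : ∀ v, θ v ∈ Set.Ioc (-π) π)
    (hstable : IsStableState (G.adjMatrix ℝ) θ) (hρ : OrderParamNonneg θ)
    (γ β : ℝ) (hγ : 0 < γ) (hγβ : γ < β) (hβ : β ≤ π/2) :
    Real.sin (β - γ) *
        edgeCount (G.adjMatrix ℝ) (Finset.univ.filter fun v => β ≤ |θ v|)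
          ((Finset.univ.filter fun v => γ ≤ |θ v|)ᶜ) ≤
      edgeCount (G.adjMatrix ℝ) (Finset.univ.filter fun v => π/2 ≤ |θ v|)
        (Finset.univ.filter fun v => β ≤ |θ v|) ∧
    edgeCount (G.adjMatrix ℝ) (Finset.univ.filter fun v => π/2 ≤ |θ v|)
        (Finset.univ.filter fun v => β ≤ |θ v|) ≤
      edgeCount (G.adjMatrix ℝ) (Finset.univ.filter fun v => β ≤ |θ v|)
        (Finset.univ.filter fun v => β ≤ |θ v|) := by
  classical
  obtain ⟨hcrit, hpsd⟩ := hstable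
  set A : Matrix V V ℝ := G.adjMatrix ℝ with hA
  have hπ : (0:ℝ) < π := Real.pi_pos
  have hA0 : ∀ v u, 0 ≤ A v u := by
    intro v u; by_cases h : G.Adj v u <;> simp [hA, h]
  have hAsymm : ∀ v u, A v u = A u v := by
    intro v u; simp [hA, SimpleGraph.adjMatrix_apply, G.adj_comm]
  have hφπ : ∀ v, |θ v| ≤ π := fun v => abs_le.2 ⟨le_of_lt (hrange v).1, (hrange v).2⟩
  set ψ : V → ℝ := fun v => min |θ v| (π/2) with hψ
  have hψ0 : ∀ v, 0 ≤ ψ v := fun v => le_min (abs_nonneg _) (by linarith)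
  have hψhalf : ∀ v, ψ v ≤ π/2 := fun v => min_le_right _ _
  -- first-order condition, symmetrized direction
  have hcrit' : ∀ v, ∑ u, A v u * Real.sin (θ u - θ v) = 0 := by
    intro v
    have := hcrit v
    have h2 : ∑ u, A v u * Real.sin (θ u - θ v) = -∑ u, A v u * Real.sin (θ v - θ u) := by
      rw [← Finset.sum_neg_distrib]
      refine Finset.sum_congr rfl fun u _ => ?_
      rw [show θ u - θ v = -(θ v - θ u) by ring, Real.sin_neg]; ring
    rw [h2, this, neg_zero]
  -- PSD diagonal
  have hdiag : ∀ v, 0 ≤ ∑ u, A v u * Real.cos (θ u - θ v) := by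
    intro v
    have h0 := hpsd.dotProduct_mulVec_nonneg (Pi.single v 1)
    rw [Matrix.mulVec_single, star_trivial, dotProduct, Fintype.sum_eq_single v
      (fun w hw => by simp [Pi.single_eq_of_ne hw]), Pi.single_eq_same, one_mul, MulOpposite.op_one, one_smul] at h0
    change 0 ≤ kuramotoHessian A θ v v at h0
    have hdd : kuramotoHessian A θ v v = ∑ u, A v u * Real.cos (θ v - θ u) := by
      simp [kuramotoHessian]
    rw [hdd] at h0
    calc (0:ℝ) ≤ ∑ u, A v u * Real.cos (θ v - θ u) := h0
      _ = ∑ u, A v u * Real.cos (θ u - θ v) := by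
          refine Finset.sum_congr rfl fun u _ => ?_
          rw [show θ u - θ v = -(θ v - θ u) by ring, Real.cos_neg]
  -- sign function
  set s : V → ℝ := fun v => if 0 ≤ θ v then (1:ℝ) else -1 with hs
  have hsθ : ∀ v, s v * θ v = |θ v| := by
    intro v; by_cases h : 0 ≤ θ v
    · simp [hs, h, abs_of_nonneg h]
    · simp [hs, h, abs_of_neg (lt_of_not_ge h)]
  have hs1 : ∀ v, s v = 1 ∨ s v = -1 := by
    intro v; by_cases h : 0 ≤ θ v <;> simp [hs, h]
  have hsabs : ∀ v u, s v * θ u ≤ |θ u| ∧ -|θ u| ≤ s v * θ u := by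
    intro v u
    rcases hs1 v with h | h <;> rw [h] <;>
      simp only [one_mul, neg_one_mul] <;>
      exact ⟨by linarith [le_abs_self (θ u), neg_abs_le (θ u)],
             by linarith [le_abs_self (θ u), neg_abs_le (θ u)]⟩
  -- key stability inequality
  have key : ∀ v, 0 ≤ ∑ u, A v u * Real.sin (s v * θ u - ψ v) := by
    intro v
    have hc0 : 0 ≤ |θ v| - ψ v := by simp [hψ]
    have hcπ : |θ v| - ψ v ≤ π := by
      have := hφπ v; have := hψ0 v; linarith
    have hterm : ∀ u, Real.sin (s v * θ u - ψ v)
        = s v * Real.sin (θ u - θ v) * Real.cos (|θ v| - ψ v)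
          + Real.cos (θ u - θ v) * Real.sin (|θ v| - ψ v) := by
      intro u
      have h1 : s v * θ u - ψ v = s v * (θ u - θ v) + (|θ v| - ψ v) := by
        rw [← hsθ v]; ring
      rw [h1, Real.sin_add]
      rcases hs1 v with h | h
      · rw [h, one_mul, one_mul]
      · rw [h, neg_one_mul, neg_one_mul, Real.sin_neg, Real.cos_neg]
    calc (0:ℝ) ≤ Real.sin (|θ v| - ψ v) * ∑ u, A v u * Real.cos (θ u - θ v) :=
          mul_nonneg (Real.sin_nonneg_of_nonneg_of_le_pi hc0 hcπ) (hdiag v)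
      _ = ∑ u, A v u * Real.sin (s v * θ u - ψ v) := by
          rw [Finset.mul_sum]
          have : ∑ u, A v u * Real.sin (s v * θ u - ψ v)
              = (s v * Real.cos (|θ v| - ψ v)) * ∑ u, A v u * Real.sin (θ u - θ v)
                + Real.sin (|θ v| - ψ v) * ∑ u, A v u * Real.cos (θ u - θ v) := by
            rw [Finset.mul_sum, Finset.mul_sum, ← Finset.sum_add_distrib]
            refine Finset.sum_congr rfl fun u _ => ?_
            rw [hterm u]; ring
          rw [this, hcrit' v, mul_zero, zero_add, Finset.mul_sum]
  -- pointwise bound for v in C_beta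
  have hpt : ∀ v ∈ Finset.univ.filter (fun v => β ≤ |θ v|), ∀ u : V,
      Real.sin (s v * θ u - ψ v) ≤
        (if β ≤ |θ u| then Real.sin (|θ u| - ψ v) else 0)
          + (if γ ≤ |θ u| then 0 else Real.sin (γ - β)) := by
    intro v hv u
    have hvβ : β ≤ |θ v| := by simpa using hv
    have hψβ : β ≤ ψ v := le_min hvβ hβ
    obtain ⟨hub, hlb⟩ := hsabs v u
    by_cases h1 : β ≤ |θ u|
    · have h2 : γ ≤ |θ u| := le_trans (le_of_lt hγβ) h1
      rw [if_pos h1, if_pos h2, add_zero]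
      have hpm : s v * θ u = |θ u| ∨ s v * θ u = -|θ u| := by
        rcases hs1 v with h | h <;> rcases abs_choice (θ u) with h' | h' <;>
          rw [h] <;> first | (left; linarith) | (right; linarith)
      rcases hpm with he | he
      · rw [he]
      · rw [he]
        have hid := Real.sin_sub_sin (|θ u| - ψ v) (-|θ u| - ψ v)
        have e1 : (|θ u| - ψ v - (-|θ u| - ψ v)) / 2 = |θ u| := by ring
        have e2 : (|θ u| - ψ v + (-|θ u| - ψ v)) / 2 = -ψ v := by ring
        rw [e1, e2, Real.cos_neg] at hid
        have h3 : 0 ≤ Real.sin |θ u| :=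
          Real.sin_nonneg_of_nonneg_of_le_pi (abs_nonneg _) (hφπ u)
        have h4 : 0 ≤ Real.cos (ψ v) :=
          Real.cos_nonneg_of_mem_Icc ⟨by linarith [hψ0 v], hψhalf v⟩
        nlinarith [hid, h3, h4]
    · push_neg at h1
      by_cases h2 : γ ≤ |θ u|
      · rw [if_neg (not_le.2 h1), if_pos h2, add_zero]
        exact Real.sin_nonpos_of_nonpos_of_neg_pi_le (by linarith)
          (by linarith [hψhalf v])
      · push_neg at h2
        rw [if_neg (not_le.2 h1), if_neg (not_le.2 h2), zero_add]
        exact sin_le_sin_aux' (by linarith) (by linarith [hψhalf v]) (by linarith)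
  -- abbreviations
  set Cb := Finset.univ.filter (fun v => β ≤ |θ v|) with hCb
  set Cg := Finset.univ.filter (fun v => γ ≤ |θ v|) with hCg
  set Ch := Finset.univ.filter (fun v => π/2 ≤ |θ v|) with hCh
  have hcompl : Cgᶜ = Finset.univ.filter (fun v => ¬ γ ≤ |θ v|) := by
    ext x; simp [hCg]
  set S := ∑ v ∈ Cb, ∑ u ∈ Cb, A v u * Real.sin (|θ u| - ψ v) with hS
  -- lower bound : sin(β-γ) e(Cβ, Cγᶜ) ≤ S
  have hlow : ∀ v ∈ Cb, 0 ≤ (∑ u ∈ Cb, A v u * Real.sin (|θ u| - ψ v))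
      + Real.sin (γ - β) * ∑ u ∈ Cgᶜ, A v u := by
    intro v hv
    calc (0:ℝ) ≤ ∑ u, A v u * Real.sin (s v * θ u - ψ v) := key v
      _ ≤ ∑ u, A v u * ((if β ≤ |θ u| then Real.sin (|θ u| - ψ v) else 0)
            + (if γ ≤ |θ u| then 0 else Real.sin (γ - β))) :=
          Finset.sum_le_sum fun u _ => mul_le_mul_of_nonneg_left (hpt v hv u) (hA0 v u)
      _ = (∑ u ∈ Cb, A v u * Real.sin (|θ u| - ψ v))
            + Real.sin (γ - β) * ∑ u ∈ Cgᶜ, A v u := by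
          rw [hcompl, Finset.mul_sum, hCb, Finset.sum_filter, Finset.sum_filter,
            ← Finset.sum_add_distrib]
          refine Finset.sum_congr rfl fun u _ => ?_
          by_cases h1 : β ≤ |θ u| <;> by_cases h2 : γ ≤ |θ u| <;>
            simp [h1, h2] <;> ring
  have hlowS : Real.sin (β - γ) * (∑ v ∈ Cb, ∑ u ∈ Cgᶜ, A v u) ≤ S := by
    have h0 : (0:ℝ) ≤ ∑ v ∈ Cb, ((∑ u ∈ Cb, A v u * Real.sin (|θ u| - ψ v))
        + Real.sin (γ - β) * ∑ u ∈ Cgᶜ, A v u) := Finset.sum_nonneg hlow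
    rw [Finset.sum_add_distrib, ← Finset.mul_sum] at h0
    have hneg : Real.sin (γ - β) = -Real.sin (β - γ) := by
      rw [show γ - β = -(β - γ) by ring, Real.sin_neg]
    rw [hneg] at h0
    rw [hS]; linarith
  -- S = its transpose T
  set T := ∑ v ∈ Cb, ∑ u ∈ Cb, A v u * Real.sin (|θ v| - ψ u) with hT
  have hST : S = T := by
    rw [hS, Finset.sum_comm, hT]
    refine Finset.sum_congr rfl fun v _ => Finset.sum_congr rfl fun u _ => ?_
    rw [hAsymm]
  -- pairwise upper bound
  have hpair : ∀ v ∈ Cb, ∀ u ∈ Cb,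
      Real.sin (|θ u| - ψ v) + Real.sin (|θ v| - ψ u) ≤
        (if π/2 ≤ |θ u| then (1:ℝ) else 0) + (if π/2 ≤ |θ v| then (1:ℝ) else 0) := by
    intro v _ u _
    by_cases h1 : π/2 ≤ |θ u| <;> by_cases h2 : π/2 ≤ |θ v|
    · rw [if_pos h1, if_pos h2]
      linarith [Real.sin_le_one (|θ u| - ψ v), Real.sin_le_one (|θ v| - ψ u)]
    · rw [if_pos h1, if_neg h2]
      push_neg at h2
      have hψu : ψ u = π/2 := min_eq_right h1
      have hb : Real.sin (|θ v| - ψ u) ≤ 0 := by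
        rw [hψu]
        exact Real.sin_nonpos_of_nonpos_of_neg_pi_le (by linarith)
          (by linarith [abs_nonneg (θ v)])
      linarith [Real.sin_le_one (|θ u| - ψ v)]
    · rw [if_neg h1, if_pos h2]
      push_neg at h1
      have hψv : ψ v = π/2 := min_eq_right h2
      have hb : Real.sin (|θ u| - ψ v) ≤ 0 := by
        rw [hψv]
        exact Real.sin_nonpos_of_nonpos_of_neg_pi_le (by linarith)
          (by linarith [abs_nonneg (θ u)])
      linarith [Real.sin_le_one (|θ v| - ψ u)]
    · rw [if_neg h1, if_neg h2]
      push_neg at h1; push_neg at h2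
      have hψu : ψ u = |θ u| := min_eq_left (le_of_lt h1)
      have hψv : ψ v = |θ v| := min_eq_left (le_of_lt h2)
      rw [hψu, hψv, show |θ v| - |θ u| = -(|θ u| - |θ v|) by ring, Real.sin_neg]
      simp
  -- filter identities
  have hChCb : Cb.filter (fun u => π/2 ≤ |θ u|) = Ch := by
    ext x; simp only [hCb, hCh, Finset.mem_filter, Finset.mem_univ, true_and]
    exact ⟨fun h => h.2, fun h => ⟨le_trans hβ h, h⟩⟩
  have hsub : Ch ⊆ Cb := by
    rw [← hChCb]; exact Finset.filter_subset _ _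
  -- S ≤ e(C_{π/2}, C_β)
  have hupS : S ≤ ∑ v ∈ Ch, ∑ u ∈ Cb, A v u := by
    have h2S : S + T ≤ ∑ v ∈ Cb, ∑ u ∈ Cb,
        (A v u * (if π/2 ≤ |θ u| then (1:ℝ) else 0)
          + A v u * (if π/2 ≤ |θ v| then (1:ℝ) else 0)) := by
      calc S + T = ∑ v ∈ Cb, ∑ u ∈ Cb,
          (A v u * Real.sin (|θ u| - ψ v) + A v u * Real.sin (|θ v| - ψ u)) := by
            rw [hS, hT, ← Finset.sum_add_distrib]
            exact Finset.sum_congr rfl fun v _ => (Finset.sum_add_distrib).symm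
        _ ≤ _ := Finset.sum_le_sum fun v hv => Finset.sum_le_sum fun u hu => by
            have h := hpair v hv u hu
            have h0 := hA0 v u
            nlinarith
    have hP1 : ∑ v ∈ Cb, ∑ u ∈ Cb, A v u * (if π/2 ≤ |θ u| then (1:ℝ) else 0)
        = ∑ v ∈ Cb, ∑ u ∈ Ch, A v u := by
      refine Finset.sum_congr rfl fun v _ => ?_
      calc ∑ u ∈ Cb, A v u * (if π/2 ≤ |θ u| then (1:ℝ) else 0)
          = ∑ u ∈ Cb, (if π/2 ≤ |θ u| then A v u else 0) :=
            Finset.sum_congr rfl fun u _ => by by_cases h : π/2 ≤ |θ u| <;> simp [h]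
        _ = ∑ u ∈ Cb.filter (fun u => π/2 ≤ |θ u|), A v u :=
            (Finset.sum_filter (fun u => π/2 ≤ |θ u|) (fun u => A v u)).symm
        _ = ∑ u ∈ Ch, A v u := by rw [hChCb]
    have hP2 : ∑ v ∈ Cb, ∑ u ∈ Cb, A v u * (if π/2 ≤ |θ v| then (1:ℝ) else 0)
        = ∑ v ∈ Ch, ∑ u ∈ Cb, A v u := by
      calc ∑ v ∈ Cb, ∑ u ∈ Cb, A v u * (if π/2 ≤ |θ v| then (1:ℝ) else 0)
          = ∑ v ∈ Cb, (if π/2 ≤ |θ v| then (∑ u ∈ Cb, A v u) else 0) :=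
            Finset.sum_congr rfl fun v _ => by by_cases h : π/2 ≤ |θ v| <;> simp [h]
        _ = ∑ v ∈ Cb.filter (fun v => π/2 ≤ |θ v|), ∑ u ∈ Cb, A v u :=
            (Finset.sum_filter (fun v => π/2 ≤ |θ v|) (fun v => ∑ u ∈ Cb, A v u)).symm
        _ = ∑ v ∈ Ch, ∑ u ∈ Cb, A v u := by rw [hChCb]
    have hP1' : ∑ v ∈ Cb, ∑ u ∈ Ch, A v u = ∑ v ∈ Ch, ∑ u ∈ Cb, A v u := by
      refine Finset.sum_comm.trans ?_
      exact Finset.sum_congr rfl fun v _ => Finset.sum_congr rfl fun u _ => hAsymm u v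
    have hsplit : ∑ v ∈ Cb, ∑ u ∈ Cb,
        (A v u * (if π/2 ≤ |θ u| then (1:ℝ) else 0)
          + A v u * (if π/2 ≤ |θ v| then (1:ℝ) else 0))
        = (∑ v ∈ Cb, ∑ u ∈ Cb, A v u * (if π/2 ≤ |θ u| then (1:ℝ) else 0))
          + ∑ v ∈ Cb, ∑ u ∈ Cb, A v u * (if π/2 ≤ |θ v| then (1:ℝ) else 0) := by
      calc ∑ v ∈ Cb, ∑ u ∈ Cb, (A v u * (if π/2 ≤ |θ u| then (1:ℝ) else 0)
            + A v u * (if π/2 ≤ |θ v| then (1:ℝ) else 0))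
          = ∑ v ∈ Cb, ((∑ u ∈ Cb, A v u * (if π/2 ≤ |θ u| then (1:ℝ) else 0))
            + ∑ u ∈ Cb, A v u * (if π/2 ≤ |θ v| then (1:ℝ) else 0)) :=
            Finset.sum_congr rfl fun v _ => Finset.sum_add_distrib
        _ = _ := Finset.sum_add_distrib
    rw [hsplit, hP1, hP1', hP2, ← hST] at h2S
    linarith
  -- finish
  constructor
  · exact le_trans hlowS hupS
  · show ∑ v ∈ Ch, ∑ u ∈ Cb, A v u ≤ ∑ v ∈ Cb, ∑ u ∈ Cb, A v u
    exact Finset.sum_le_sum_of_subset_of_nonneg hsub fun v _ _ =>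
      Finset.sum_nonneg fun u _ => hA0 v u
end

section
/- Suppose θ is a nontrivial stable state of the homogeneous Kuramoto model on a connected graph H, with phases normalized so that Σ_v e^{iθ_v} is a nonnegative real. Then there exists a vertex v with |θ_v| ≥ π/2 (i.e., the phases do not all lie in the open half-circle (−π/2, π/2)). -/
open Real Finset
open scoped ENNReal

theorem stmt_15 {V : Type*} [Fintype V] [DecidableEq V] (H : SimpleGraph V) [DecidableRel H.Adj]
    (hconn : H.Connected)
    (θ : V → ℝ) (hrange : ∀ v, θ v ∈ Set.Ioc (-π) π)
    (hstable : IsStableState (H.adjMatrix ℝ) θ) (hρ : OrderParamNonneg θ)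
    (hnontriv : ∃ u v, θ u ≠ θ v) :
    ∃ v, π/2 ≤ |θ v| := by
  by_contra hcon
  push_neg at hcon
  have hsmall : ∀ v, -(π/2) < θ v ∧ θ v < π/2 := fun v => abs_lt.1 (hcon v)
  have hV : Nonempty V := hconn.nonempty
  obtain ⟨v₀, hv₀⟩ := Finite.exists_max θ
  -- key step: if θ v is maximal, every neighbor has the same phase
  have key : ∀ v, θ v = θ v₀ → ∀ u, H.Adj v u → θ u = θ v₀ := by
    intro v hv u hu
    have hst := hstable.1 v
    have hnn : ∀ w ∈ Finset.univ, 0 ≤ (H.adjMatrix ℝ) v w * Real.sin (θ v - θ w) := by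
      intro w _
      apply mul_nonneg
      · simp [SimpleGraph.adjMatrix_apply]
        split <;> norm_num
      · apply Real.sin_nonneg_of_nonneg_of_le_pi
        · have := hv₀ w
          rw [hv]; linarith
        · have h1 := (hsmall v).2
          have h2 := (hsmall w).1
          have : θ v - θ w < π := by
            have hπ : (0:ℝ) < π := Real.pi_pos
            linarith
          linarith
    have hzero := (Finset.sum_eq_zero_iff_of_nonneg hnn).1 hst u (Finset.mem_univ u)
    rw [SimpleGraph.adjMatrix_apply, if_pos hu, one_mul] at hzero
    have hlt1 : θ v - θ u < π := by
      have h1 := (hsmall v).2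
      have h2 := (hsmall u).1
      have hπ : (0:ℝ) < π := Real.pi_pos
      linarith
    have hlt2 : -π < θ v - θ u := by
      have h1 := (hsmall v).1
      have h2 := (hsmall u).2
      have hπ : (0:ℝ) < π := Real.pi_pos
      linarith
    have := (Real.sin_eq_zero_iff_of_lt_of_lt hlt2 hlt1).1 hzero
    have : θ u = θ v := by linarith
    rw [this, hv]
  -- propagate along walks
  have walkprop : ∀ {a b : V} (_ : H.Walk a b), θ a = θ v₀ → θ b = θ v₀ := by
    intro a b p
    induction p with
    | nil => exact id
    | cons h _ ih => exact fun ha => ih (key _ ha _ h)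
  have hall : ∀ w, θ w = θ v₀ := by
    intro w
    obtain ⟨p⟩ := hconn.preconnected v₀ w
    exact walkprop p rfl
  obtain ⟨u, v, huv⟩ := hnontriv
  exact huv ((hall u).trans (hall v).symm)
end
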